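/- Let G be a group and let T and U be finite nonempty transitive G-sets such that there exists at least one G-map from T to U. Then Nat.card(Map_G(T, T)) · Nat.card(U) divides Nat.card(Map_G(T, U)) · Nat.card(T). -/

import Mathlib

open MulAction

/-- A free action of a group gives divisibility of cardinalities. -/
private lemma nat_card_dvd_of_free_action {α β : Type*} [Group α] [MulAction α β]
    (hf : ∀ (a : α) (b : β), a • b = b → a = 1) : Nat.card α ∣ Nat.card β := by
  classical
  have hstab : ∀ ω : orbitRel.Quotient α β, stabilizer α ω.out = ⊥ := by
    intro ω
    rw [Subgroup.eq_bot_iff_forall]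
    intro a ha
    exact hf a _ ha
  let e₂ : β ≃ (orbitRel.Quotient α β) × α :=
    (MulAction.selfEquivSigmaOrbitsQuotientStabilizer α β).trans
      ((Equiv.sigmaCongrRight fun ω =>
        (Subgroup.quotientEquivOfEq (hstab ω)).trans QuotientGroup.quotientBot.toEquiv).trans
        (Equiv.sigmaEquivProd _ _))
  rw [Nat.card_congr e₂, Nat.card_prod]
  exact dvd_mul_left _ _

theorem card_gmaps_self_mul_card_dvd {G T U : Type*} [Group G] [MulAction G T] [MulAction G U]
    [Finite T] [Finite U] [Nonempty T] [Nonempty U]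
    [MulAction.IsPretransitive G T] [MulAction.IsPretransitive G U]
    (h : ∃ f : T → U, ∀ (g : G) (t : T), f (g • t) = g • f t) :
    Nat.card {f : T → T // ∀ (g : G) (t : T), f (g • t) = g • f t} * Nat.card U ∣
      Nat.card {f : T → U // ∀ (g : G) (t : T), f (g • t) = g • f t} * Nat.card T := by
  classical
  obtain ⟨t₀⟩ := ‹Nonempty T›
  obtain ⟨u₀⟩ := ‹Nonempty U›
  set E := {f : T → T // ∀ (g : G) (t : T), f (g • t) = g • f t} with hE
  set M := {f : T → U // ∀ (g : G) (t : T), f (g • t) = g • f t} with hM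
  -- the fiber of evaluation over u
  let Fib : U → Type _ := fun u => {p : M × T // p.1.1 p.2 = u}
  -- Step A : all fibers are equinumerous
  have fibEquiv : ∀ u : U, Nonempty (Fib u ≃ Fib u₀) := by
    intro u
    obtain ⟨g, hg⟩ := MulAction.exists_smul_eq G u u₀
    refine ⟨⟨fun p => ⟨(p.1.1, g • p.1.2), ?_⟩, fun p => ⟨(p.1.1, g⁻¹ • p.1.2), ?_⟩, ?_, ?_⟩⟩
    · rw [p.1.1.2 g p.1.2, p.2, hg]
    · rw [p.1.1.2 g⁻¹ p.1.2, p.2, ← hg, inv_smul_smul]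
    · intro p
      apply Subtype.ext
      show ((p : M × T).1, g⁻¹ • g • (p : M × T).2) = (p : M × T)
      rw [inv_smul_smul]
    · intro p
      apply Subtype.ext
      show ((p : M × T).1, g • g⁻¹ • (p : M × T).2) = (p : M × T)
      rw [smul_inv_smul]
  have cardA : Nat.card M * Nat.card T = Nat.card U * Nat.card (Fib u₀) := by
    rw [← Nat.card_prod, ← Nat.card_prod]
    refine Nat.card_congr ?_
    exact ((Equiv.sigmaFiberEquiv (fun p : M × T => p.1.1 p.2)).symm.trans
      ((Equiv.sigmaCongrRight fun u => (fibEquiv u).some).trans (Equiv.sigmaEquivProd _ _)))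
  -- Step B : the monoid of equivariant self-maps is a group
  have hbij : ∀ f : E, Function.Bijective f.1 := by
    intro f
    apply Function.Surjective.bijective_of_finite
    intro t
    obtain ⟨g, hg⟩ := MulAction.exists_smul_eq G (f.1 t₀) t
    exact ⟨g • t₀, by rw [f.2, hg]⟩
  let S : Subgroup (Equiv.Perm T) :=
    { carrier := {σ | ∀ (g : G) (t : T), σ (g • t) = g • σ t}
      mul_mem' := by
        intro a b ha hb g t
        show a (b (g • t)) = g • a (b t)
        rw [hb g t, ha g (b t)]
      one_mem' := fun g t => rfl
      inv_mem' := by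
        intro σ hσ g t
        apply σ.injective
        have h1 : σ (σ⁻¹ (g • t)) = g • t := by simp [Equiv.Perm.inv_def]
        have h2 : σ (g • σ⁻¹ t) = g • σ (σ⁻¹ t) := hσ g _
        have h3 : σ (σ⁻¹ t) = t := by simp [Equiv.Perm.inv_def]
        rw [h1, h2, h3] }
  have eES : E ≃ S :=
    { toFun := fun f => ⟨Equiv.ofBijective f.1 (hbij f), f.2⟩
      invFun := fun σ => ⟨σ.1, σ.2⟩
      left_inv := fun f => rfl
      right_inv := fun σ => Subtype.ext (Equiv.ext fun t => rfl) }
  -- S acts freely on the fiber over u₀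
  letI : SMul S (Fib u₀) := ⟨fun σ p =>
    ⟨(⟨p.1.1.1 ∘ ⇑((σ⁻¹ : S) : Equiv.Perm T), fun g t => by
        simp only [Function.comp_apply]
        rw [(σ⁻¹ : S).2 g t, p.1.1.2]⟩,
      (σ : Equiv.Perm T) p.1.2), by
        simp only [Function.comp_apply]
        have : ((σ⁻¹ : S) : Equiv.Perm T) ((σ : Equiv.Perm T) p.1.2) = p.1.2 := by
          simp
        rw [this, p.2]⟩⟩
  letI : MulAction S (Fib u₀) :=
    { one_smul := fun p => by
        apply Subtype.ext
        apply Prod.ext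
        · apply Subtype.ext
          funext t
          rfl
        · rfl
      mul_smul := fun a b p => by
        apply Subtype.ext
        apply Prod.ext
        · apply Subtype.ext
          funext t
          rfl
        · rfl }
  have hfree : ∀ (σ : S) (p : Fib u₀), σ • p = p → σ = 1 := by
    intro σ p hp
    have h2 : (σ : Equiv.Perm T) p.1.2 = p.1.2 := by
      have := congrArg (fun q : Fib u₀ => q.1.2) hp
      exact this
    apply Subtype.ext
    apply Equiv.ext
    intro t
    obtain ⟨g, hg⟩ := MulAction.exists_smul_eq G p.1.2 t
    show (σ : Equiv.Perm T) t = t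
    rw [← hg, σ.2 g p.1.2, h2]
  have hdvd : Nat.card S ∣ Nat.card (Fib u₀) := nat_card_dvd_of_free_action hfree
  rw [cardA, Nat.card_congr eES, mul_comm (Nat.card U)]
  exact mul_dvd_mul_right hdvd (Nat.card U)
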